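/- arXiv:2006.03988 — 4 statements merged into one kernel-verified Lean document; each statement's English description precedes it below -/
import Mathlib

section
/- Let p : ℕ → ℝ satisfy p(ℓ) ≥ 0 for all ℓ, and let k_ρ, k_ζ, k, M be natural numbers with k_ρ ≤ k_ζ ≤ k ≤ M. Set Z_ζ = ∑_{ℓ=k_ζ}^{M} p(ℓ)·p(0)^{ℓ−k_ζ} and Z_ρ = ∑_{ℓ=k_ρ}^{M} p(ℓ)·p(0)^{ℓ−k_ρ}, and assume Z_ζ > 0 and Z_ρ > 0. Then (1/Z_ζ)·∑_{ℓ=k_ζ}^{k} p(ℓ)·p(0)^{ℓ−k_ζ} ≤ (1/Z_ρ)·∑_{ℓ=k_ρ}^{k} p(ℓ)·p(0)^{ℓ−k_ρ}. -/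
open Finset in
/-- One-site conditional-distribution monotonicity (the FKG criterion inequality):
with `Z_ζ = ∑_{ℓ=k_ζ}^{M} p(ℓ)p(0)^{ℓ−k_ζ}` and `Z_ρ = ∑_{ℓ=k_ρ}^{M} p(ℓ)p(0)^{ℓ−k_ρ}`
both positive, `(1/Z_ζ)∑_{ℓ=k_ζ}^{k} p(ℓ)p(0)^{ℓ−k_ζ} ≤ (1/Z_ρ)∑_{ℓ=k_ρ}^{k} p(ℓ)p(0)^{ℓ−k_ρ}`. -/
theorem fkg_conditional_monotonicity (p : ℕ → ℝ) (hp : ∀ ℓ, 0 ≤ p ℓ)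
    (kρ kζ k M : ℕ) (h1 : kρ ≤ kζ) (h2 : kζ ≤ k) (h3 : k ≤ M)
    (hZζ : 0 < ∑ ℓ ∈ Icc kζ M, p ℓ * p 0 ^ (ℓ - kζ))
    (hZρ : 0 < ∑ ℓ ∈ Icc kρ M, p ℓ * p 0 ^ (ℓ - kρ)) :
    (1 / ∑ ℓ ∈ Icc kζ M, p ℓ * p 0 ^ (ℓ - kζ)) * ∑ ℓ ∈ Icc kζ k, p ℓ * p 0 ^ (ℓ - kζ)
      ≤ (1 / ∑ ℓ ∈ Icc kρ M, p ℓ * p 0 ^ (ℓ - kρ)) * ∑ ℓ ∈ Icc kρ k, p ℓ * p 0 ^ (ℓ - kρ) := by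
  set c : ℝ := p 0 ^ (kζ - kρ) with hc
  have hc0 : 0 ≤ c := pow_nonneg (hp 0) _
  have hnn : ∀ (a : ℕ) (s : Finset ℕ), 0 ≤ ∑ ℓ ∈ s, p ℓ * p 0 ^ (ℓ - a) := fun a s =>
    sum_nonneg fun _ _ => mul_nonneg (hp _) (pow_nonneg (hp 0) _)
  have split : ∀ (a : ℕ), a ≤ k →
      (∑ ℓ ∈ Icc a M, p ℓ * p 0 ^ (ℓ - a))
        = (∑ ℓ ∈ Icc a k, p ℓ * p 0 ^ (ℓ - a)) + ∑ ℓ ∈ Ioc k M, p ℓ * p 0 ^ (ℓ - a) := by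
    intro a ha
    have hd : Disjoint (Icc a k) (Ioc k M) := by
      simp only [Finset.disjoint_left, Finset.mem_Icc, Finset.mem_Ioc]
      omega
    have hu : Icc a k ∪ Ioc k M = Icc a M := by
      ext x; simp only [Finset.mem_union, Finset.mem_Icc, Finset.mem_Ioc]; omega
    rw [← Finset.sum_union hd, hu]
  have hBρ : (∑ ℓ ∈ Ioc k M, p ℓ * p 0 ^ (ℓ - kρ))
      = c * ∑ ℓ ∈ Ioc k M, p ℓ * p 0 ^ (ℓ - kζ) := by
    rw [Finset.mul_sum]
    refine Finset.sum_congr rfl fun ℓ hℓ => ?_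
    rw [Finset.mem_Ioc] at hℓ
    have : ℓ - kρ = (kζ - kρ) + (ℓ - kζ) := by omega
    rw [this, pow_add]; ring
  have hAρ : c * (∑ ℓ ∈ Icc kζ k, p ℓ * p 0 ^ (ℓ - kζ))
      ≤ ∑ ℓ ∈ Icc kρ k, p ℓ * p 0 ^ (ℓ - kρ) := by
    have heq : c * (∑ ℓ ∈ Icc kζ k, p ℓ * p 0 ^ (ℓ - kζ))
        = ∑ ℓ ∈ Icc kζ k, p ℓ * p 0 ^ (ℓ - kρ) := by
      rw [Finset.mul_sum]
      refine Finset.sum_congr rfl fun ℓ hℓ => ?_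
      rw [Finset.mem_Icc] at hℓ
      have : ℓ - kρ = (kζ - kρ) + (ℓ - kζ) := by omega
      rw [this, pow_add]; ring
    rw [heq]
    exact Finset.sum_le_sum_of_subset_of_nonneg (Finset.Icc_subset_Icc_left h1)
      (fun _ _ _ => mul_nonneg (hp _) (pow_nonneg (hp 0) _))
  rw [one_div_mul_eq_div, one_div_mul_eq_div, div_le_div_iff₀ hZζ hZρ,
    split kζ h2, split kρ (h1.trans h2), hBρ]
  have hBζ0 : 0 ≤ ∑ ℓ ∈ Ioc k M, p ℓ * p 0 ^ (ℓ - kζ) := hnn _ _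
  nlinarith [mul_le_mul_of_nonneg_right hAρ hBζ0, hnn kζ (Icc kζ k), hnn kρ (Icc kρ k)]
end

section
/- There exists a constant C > 0 such that for all real numbers k > 4, all real u with √k < u ≤ k/2, and all ξ with 0 ≤ ξ ≤ 1/2, one has (1 − log(u²/k)/log k)^{−ξ} ≤ 1 + (C·ξ/log k)·(u²/k). -/
set_option maxHeartbeats 1000000 in
/-- There is a universal `C > 0` such that for `k > 4`, `√k < u ≤ k/2` and
`0 ≤ ξ ≤ 1/2`, one has `(1 − log(u²/k)/log k)^{−ξ} ≤ 1 + (Cξ/log k)·(u²/k)`. -/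
theorem rpow_log_correction_bound :
    ∃ C : ℝ, 0 < C ∧ ∀ k u ξ : ℝ, 4 < k → Real.sqrt k < u → u ≤ k / 2 →
      0 ≤ ξ → ξ ≤ 1 / 2 →
      (1 - Real.log (u ^ 2 / k) / Real.log k) ^ (-ξ)
        ≤ 1 + (C * ξ / Real.log k) * (u ^ 2 / k) := by
  refine ⟨216, by norm_num, ?_⟩
  intro k u ξ hk4 hu1 hu2 hξ0 hξ2
  have hk0 : (0:ℝ) < k := by linarith
  set x : ℝ := u ^ 2 / k with hxdef
  set lk : ℝ := Real.log k with hlkdef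
  have hlog4 : (1:ℝ) ≤ Real.log 4 := by
    rw [Real.le_log_iff_exp_le (by norm_num)]
    have := Real.exp_one_lt_d9
    linarith
  have hlk4 : Real.log 4 < lk := Real.log_lt_log (by norm_num) hk4
  have hlk1 : (1:ℝ) < lk := lt_of_le_of_lt hlog4 hlk4
  have hlk0 : (0:ℝ) < lk := by linarith
  have hu0 : 0 < u := lt_of_le_of_lt (Real.sqrt_nonneg k) hu1
  have hx1 : 1 < x := by
    rw [hxdef, lt_div_iff₀ hk0, one_mul]
    nlinarith [Real.sq_sqrt hk0.le, Real.sqrt_nonneg k]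
  have hx0 : (0:ℝ) < x := by linarith
  have hxk4 : x ≤ k / 4 := by
    rw [hxdef, div_le_div_iff₀ hk0 (by norm_num)]
    nlinarith
  have hlogx0 : 0 < Real.log x := Real.log_pos hx1
  have hlogxk : Real.log x ≤ lk - Real.log 4 := by
    have h1 : Real.log x ≤ Real.log (k / 4) := Real.log_le_log hx0 hxk4
    have h2 : Real.log (k / 4) = lk - Real.log 4 := by
      rw [hlkdef]; exact Real.log_div (ne_of_gt hk0) (by norm_num)
    linarith
  have hxk : x ≤ k := le_trans hxk4 (by linarith)
  clear_value x lk
  set s : ℝ := 1 - Real.log x / lk with hsdef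
  clear_value s
  have hs0 : 0 < s := by
    rw [hsdef, sub_pos, div_lt_one hlk0]; linarith
  have hs1 : s ≤ 1 := by
    rw [hsdef]
    have : 0 ≤ Real.log x / lk := by positivity
    linarith
  set L : ℝ := -Real.log s with hLdef
  clear_value L
  have hL0 : 0 ≤ L := by
    rw [hLdef, neg_nonneg]
    exact Real.log_nonpos hs0.le hs1
  -- L ≤ (1-s)/s
  have hLle : L ≤ (1 - s) / s := by
    have h1 : Real.log s⁻¹ ≤ s⁻¹ - 1 := Real.log_le_sub_one_of_pos (by positivity)
    rw [Real.log_inv] at h1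
    have h2 : s⁻¹ - 1 = (1 - s) / s := by
      rw [inv_eq_one_div, div_sub' (ne_of_gt hs0)]
      ring_nf
    rw [hLdef]
    linarith [h2 ▸ h1]
  -- exp (ξ*L) = s^(-ξ)
  have hexp_eq : s ^ (-ξ) = Real.exp (ξ * L) := by
    rw [Real.rpow_def_of_pos hs0, hLdef]; ring_nf
  -- step B : s^(-ξ) ≤ 1/s
  have hstepB : s ^ (-ξ) ≤ 1 / s := by
    have h := Real.rpow_le_rpow_of_exponent_ge hs0 hs1 (show (-1:ℝ) ≤ -ξ by linarith)
    rwa [Real.rpow_neg_one, ← one_div] at h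
  -- step A : exp y ≤ 1 + y * exp y for y = ξ*L ≥ 0
  have hy0 : 0 ≤ ξ * L := mul_nonneg hξ0 hL0
  have hstepA : Real.exp (ξ * L) ≤ 1 + (ξ * L) * Real.exp (ξ * L) := by
    have h1 : 1 - ξ * L ≤ Real.exp (-(ξ * L)) := by
      have := Real.add_one_le_exp (-(ξ * L)); linarith
    have h2 : Real.exp (-(ξ * L)) * Real.exp (ξ * L) = 1 := by
      rw [← Real.exp_add]; simp
    nlinarith [Real.exp_pos (ξ * L)]
  -- key inequality : log x ≤ 216 * x * s^2
  have key : Real.log x ≤ 216 * x * s ^ 2 := by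
    rcases le_or_gt (Real.log x) (lk / 2) with hc | hc
    · -- small case : s ≥ 1/2
      have hshalf : (1:ℝ)/2 ≤ s := by
        rw [hsdef]
        have : Real.log x / lk ≤ 1/2 := by
          rw [div_le_iff₀ hlk0]; linarith
        linarith
      have hlx : Real.log x ≤ x := by
        have := Real.log_le_sub_one_of_pos hx0; linarith
      nlinarith [mul_nonneg hx0.le (sq_nonneg (s - 1/2)),
        mul_nonneg hx0.le (show (0:ℝ) ≤ s - 1/2 by linarith)]
    · -- big case
      have hslk : 1 / lk ≤ s := by
        rw [div_le_iff₀ hlk0, hsdef, sub_mul, one_mul, div_mul_cancel₀ _ (ne_of_gt hlk0)]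
        linarith
      have hsqx : Real.sqrt k ≤ x := by
        have h1 : Real.log (Real.sqrt k) < Real.log x := by
          rw [Real.log_sqrt hk0.le]; linarith
        exact le_of_lt ((Real.log_lt_log_iff (Real.sqrt_pos.mpr hk0) hx0).mp h1)
      have hlxlk : Real.log x ≤ lk := by rw [hlkdef]; exact Real.log_le_log hx0 hxk
      have hcube : lk ^ 3 ≤ 216 * Real.sqrt k := by
        set a : ℝ := k ^ ((1:ℝ)/6) with hadef
        have ha0 : 0 < a := Real.rpow_pos_of_pos hk0 _
        have hla : lk = 6 * Real.log a := by
          rw [hadef, Real.log_rpow hk0, hlkdef]; ring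
        have haa : Real.log a ≤ a := by
          have := Real.log_le_sub_one_of_pos ha0; linarith
        have hla0 : 0 ≤ Real.log a := by
          have h := hlk0; rw [hla] at h; linarith
        have ha3 : a ^ 3 = Real.sqrt k := by
          rw [hadef, ← Real.rpow_natCast (k ^ ((1:ℝ)/6)) 3, ← Real.rpow_mul hk0.le,
            Real.sqrt_eq_rpow]
          norm_num
        clear_value a
        have hp : (Real.log a) ^ 3 ≤ a ^ 3 := pow_le_pow_left₀ hla0 haa 3
        have he : lk ^ 3 = 216 * (Real.log a) ^ 3 := by rw [hla]; ring
        rw [← ha3]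
        nlinarith [hp, he]
      have h1 : 216 * Real.sqrt k * (1 / lk) ^ 2 ≤ 216 * x * s ^ 2 := by
        have hsk0 : (0:ℝ) ≤ Real.sqrt k := Real.sqrt_nonneg k
        gcongr <;> first | positivity | exact hsqx | exact hslk
      have h2 : lk ≤ 216 * Real.sqrt k * (1 / lk) ^ 2 := by
        have e : 216 * Real.sqrt k * (1 / lk) ^ 2 = (216 * Real.sqrt k) / lk ^ 2 := by
          rw [div_pow, one_pow]; ring
        rw [e, le_div_iff₀ (by positivity)]
        nlinarith [hcube]
      linarith
  -- from key : (1-s)/s^2 ≤ 216 * x / lk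
  have hfrac : (1 - s) / s ^ 2 ≤ 216 * x / lk := by
    rw [div_le_div_iff₀ (by positivity) hlk0]
    have h1s : (1 - s) * lk = Real.log x := by
      rw [hsdef]; field_simp; ring
    rw [h1s]
    nlinarith [key, sq_nonneg s]
  -- assemble
  have hgoal : s ^ (-ξ) ≤ 1 + ξ * (216 * x / lk) := by
    calc s ^ (-ξ) = Real.exp (ξ * L) := hexp_eq
      _ ≤ 1 + (ξ * L) * Real.exp (ξ * L) := hstepA
      _ ≤ 1 + (ξ * L) * (1 / s) := by
          have h : Real.exp (ξ * L) ≤ 1 / s := by rw [← hexp_eq]; exact hstepB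
          nlinarith [h, hy0]
      _ ≤ 1 + (ξ * ((1 - s) / s)) * (1 / s) := by
          have h1s : (0:ℝ) ≤ 1 / s := by positivity
          have h := mul_le_mul_of_nonneg_left hLle hξ0
          nlinarith [h, h1s]
      _ = 1 + ξ * ((1 - s) / s ^ 2) := by
          have e2 : (1 - s) / s * (1 / s) = (1 - s) / s ^ 2 := by
            rw [div_mul_div_comm, mul_one, sq]
          rw [mul_assoc, e2]
      _ ≤ 1 + ξ * (216 * x / lk) := by
          have h := mul_le_mul_of_nonneg_left hfrac hξ0
          linarith
  calc s ^ (-ξ) ≤ 1 + ξ * (216 * x / lk) := hgoal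
    _ = 1 + 216 * ξ / lk * x := by ring
end

section
/- There exists a constant c > 0 such that for all integers m ≥ 1 and N with (24·m)² ≤ N, one has ∑_{s₁=m}^{⌊N/24⌋} ∑_{s₂=m}^{⌊N/24⌋} ∑_{h=0}^{⌊N/12⌋} 1/(2h + s₁ + s₂)³ ≥ c·log N. -/
open Finset

/-- Harmonic-type lower bound: `log(b+1) - log a ≤ ∑_{k=a}^{b} 1/k`. -/
lemma harm_lower (a : ℕ) (ha : 1 ≤ a) : ∀ b : ℕ,
    Real.log (b + 1) - Real.log a ≤ ∑ k ∈ Icc a b, (1 : ℝ) / k := by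
  intro b
  induction b with
  | zero =>
    rw [Icc_eq_empty (by omega), sum_empty]
    have h1 : (0:ℝ) ≤ Real.log a := Real.log_nonneg (by exact_mod_cast ha)
    simp only [Nat.cast_zero, zero_add, Real.log_one]
    linarith
  | succ b ih =>
    rcases le_or_gt a (b+1) with h | h
    · rw [Finset.sum_Icc_succ_top h]
      have hb : (0:ℝ) < (b:ℝ) + 1 := by positivity
      have key : Real.log ((b:ℝ) + 1 + 1) - Real.log ((b:ℝ)+1) ≤ 1 / ((b:ℝ)+1) := by
        rw [← Real.log_div (by positivity) (ne_of_gt hb)]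
        have h2 := Real.log_le_sub_one_of_pos
          (show (0:ℝ) < ((b:ℝ)+1+1)/((b:ℝ)+1) by positivity)
        have h3 : ((b:ℝ)+1+1)/((b:ℝ)+1) - 1 = 1/((b:ℝ)+1) := by field_simp; ring
        linarith
      push_cast
      push_cast at ih
      linarith
    · rw [Icc_eq_empty (by omega), sum_empty]
      have h2 : ((b:ℝ)+1+1) ≤ a := by
        have : (b+2 : ℕ) ≤ a := by omega
        exact_mod_cast this
      have h3 : Real.log ((b:ℝ)+1+1) ≤ Real.log a :=
        Real.log_le_log (by positivity) h2
      push_cast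
      linarith

set_option maxHeartbeats 1000000 in
/-- There is a constant `c > 0` such that for all integers `m ≥ 1` and `N ≥ (24m)²`,
`∑_{s₁=m}^{⌊N/24⌋} ∑_{s₂=m}^{⌊N/24⌋} ∑_{h=0}^{⌊N/12⌋} (2h+s₁+s₂)^{-3} ≥ c·log N`. -/
theorem triple_sum_log_lower_bound :
    ∃ c : ℝ, 0 < c ∧ ∀ m N : ℕ, 1 ≤ m → (24 * m) ^ 2 ≤ N →
      c * Real.log N ≤
        ∑ s₁ ∈ Icc m (N / 24), ∑ s₂ ∈ Icc m (N / 24), ∑ h ∈ Icc 0 (N / 12),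
          (1 : ℝ) / ((2 * h + s₁ + s₂ : ℕ) : ℝ) ^ 3 := by
  refine ⟨1/384, by norm_num, ?_⟩
  intro m N hm hN
  set S := N / 24 with hS
  set H := N / 12 with hH
  have hmm : m ≤ m * m := Nat.le_mul_of_pos_left m (by omega)
  have hNm : 576 * m^2 ≤ N := by
    calc 576 * m^2 = (24*m)^2 := by ring
      _ ≤ N := hN
  have hSH : S ≤ H := Nat.div_le_div_left (by norm_num) (by norm_num)
  have hmS : 2 * m ≤ S := by
    rw [hS, Nat.le_div_iff_mul_le (by norm_num)]
    calc 2*m*24 = 48*m := by ring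
      _ ≤ 576*(m*m) := by
          have h1 : 48*m ≤ 576*m := Nat.mul_le_mul_right m (by norm_num)
          have h2 : 576*m ≤ 576*(m*m) := Nat.mul_le_mul_left 576 hmm
          omega
      _ = 576*m^2 := by ring
      _ ≤ N := hNm
  clear_value S H
  -- key pointwise bound
  have key : ∀ s₁ ∈ Icc (2*m) S,
      1 / (128 * (s₁:ℝ)) ≤
        ∑ s₂ ∈ Icc m S, ∑ h ∈ Icc 0 H, (1 : ℝ) / ((2 * h + s₁ + s₂ : ℕ) : ℝ) ^ 3 := by
    intro s₁ hs₁
    rw [mem_Icc] at hs₁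
    obtain ⟨hs₁l, hs₁u⟩ := hs₁
    have hs₁pos : 0 < s₁ := by omega
    have hs₁R : (0:ℝ) < (s₁:ℝ) := by exact_mod_cast hs₁pos
    have hsubset :
        ∑ s₂ ∈ Icc m s₁, ∑ h ∈ Icc 0 s₁, (1 : ℝ) / ((2 * h + s₁ + s₂ : ℕ) : ℝ) ^ 3 ≤
        ∑ s₂ ∈ Icc m S, ∑ h ∈ Icc 0 H, (1 : ℝ) / ((2 * h + s₁ + s₂ : ℕ) : ℝ) ^ 3 := by
      calc ∑ s₂ ∈ Icc m s₁, ∑ h ∈ Icc 0 s₁, (1 : ℝ) / ((2 * h + s₁ + s₂ : ℕ) : ℝ) ^ 3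
          ≤ ∑ s₂ ∈ Icc m s₁, ∑ h ∈ Icc 0 H, (1 : ℝ) / ((2 * h + s₁ + s₂ : ℕ) : ℝ) ^ 3 := by
            refine sum_le_sum fun s₂ _ => ?_
            refine sum_le_sum_of_subset_of_nonneg
              (Icc_subset_Icc_right (le_trans hs₁u hSH)) fun _ _ _ => by positivity
        _ ≤ ∑ s₂ ∈ Icc m S, ∑ h ∈ Icc 0 H, (1 : ℝ) / ((2 * h + s₁ + s₂ : ℕ) : ℝ) ^ 3 := by
            refine sum_le_sum_of_subset_of_nonneg
              (Icc_subset_Icc_right hs₁u) fun _ _ _ => ?_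
            exact sum_nonneg fun _ _ => by positivity
    have hterm : ∀ s₂ ∈ Icc m s₁, ∀ h ∈ Icc 0 s₁,
        (1:ℝ)/((4*(s₁:ℝ))^3) ≤ (1 : ℝ) / ((2 * h + s₁ + s₂ : ℕ) : ℝ) ^ 3 := by
      intro s₂ hs₂ h hh
      rw [mem_Icc] at hs₂ hh
      have h1 : (0:ℝ) < ((2 * h + s₁ + s₂ : ℕ) : ℝ) := by
        have : 0 < 2*h+s₁+s₂ := by omega
        exact_mod_cast this
      have h2 : ((2 * h + s₁ + s₂ : ℕ) : ℝ) ≤ 4*(s₁:ℝ) := by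
        have : 2*h+s₁+s₂ ≤ 4*s₁ := by omega
        exact_mod_cast this
      gcongr
    have hconst :
        ((s₁ + 1 - m : ℕ):ℝ) * (((s₁ + 1 : ℕ)):ℝ) * (1/((4*(s₁:ℝ))^3)) ≤
        ∑ s₂ ∈ Icc m s₁, ∑ h ∈ Icc 0 s₁, (1 : ℝ) / ((2 * h + s₁ + s₂ : ℕ) : ℝ) ^ 3 := by
      have : ∑ s₂ ∈ Icc m s₁, ∑ h ∈ Icc 0 s₁, (1:ℝ)/((4*(s₁:ℝ))^3) ≤
          ∑ s₂ ∈ Icc m s₁, ∑ h ∈ Icc 0 s₁, (1 : ℝ) / ((2 * h + s₁ + s₂ : ℕ) : ℝ) ^ 3 :=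
        sum_le_sum fun s₂ hs₂ => sum_le_sum fun h hh => hterm s₂ hs₂ h hh
      calc ((s₁ + 1 - m : ℕ):ℝ) * (((s₁ + 1 : ℕ)):ℝ) * (1/((4*(s₁:ℝ))^3))
          = ∑ s₂ ∈ Icc m s₁, ∑ h ∈ Icc 0 s₁, (1:ℝ)/((4*(s₁:ℝ))^3) := by
            rw [sum_const, sum_const, Nat.card_Icc, Nat.card_Icc]
            simp [nsmul_eq_mul]
            ring
        _ ≤ _ := this
    have hA : (s₁:ℝ)/2 ≤ ((s₁ + 1 - m : ℕ):ℝ) := by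
      rw [Nat.cast_sub (by omega)]
      have : (2*m : ℕ) ≤ s₁ := hs₁l
      have : ((2*m : ℕ):ℝ) ≤ (s₁:ℝ) := by exact_mod_cast this
      push_cast at this ⊢
      linarith
    have hB : (s₁:ℝ) ≤ (((s₁ + 1 : ℕ)):ℝ) := by push_cast; linarith
    have hfin : 1 / (128 * (s₁:ℝ)) ≤
        ((s₁ + 1 - m : ℕ):ℝ) * (((s₁ + 1 : ℕ)):ℝ) * (1/((4*(s₁:ℝ))^3)) := by
      have heq : 1 / (128 * (s₁:ℝ)) = ((s₁:ℝ)/2) * (s₁:ℝ) * (1/((4*(s₁:ℝ))^3)) := by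
        field_simp
        ring
      rw [heq]
      gcongr
    linarith
  -- sum up
  have step1 : ∑ s₁ ∈ Icc (2*m) S, 1 / (128 * (s₁:ℝ)) ≤
      ∑ s₁ ∈ Icc m S, ∑ s₂ ∈ Icc m S, ∑ h ∈ Icc 0 H,
        (1 : ℝ) / ((2 * h + s₁ + s₂ : ℕ) : ℝ) ^ 3 := by
    calc ∑ s₁ ∈ Icc (2*m) S, 1 / (128 * (s₁:ℝ))
        ≤ ∑ s₁ ∈ Icc (2*m) S, ∑ s₂ ∈ Icc m S, ∑ h ∈ Icc 0 H,
            (1 : ℝ) / ((2 * h + s₁ + s₂ : ℕ) : ℝ) ^ 3 := sum_le_sum key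
      _ ≤ _ := by
          refine sum_le_sum_of_subset_of_nonneg (Icc_subset_Icc_left (by omega))
            fun _ _ _ => ?_
          exact sum_nonneg fun _ _ => sum_nonneg fun _ _ => by positivity
  have hharm : Real.log (S + 1) - Real.log ((2*m : ℕ)) ≤
      ∑ k ∈ Icc (2*m) S, (1:ℝ)/k := harm_lower (2*m) (by omega) S
  have hdistr : ∑ s₁ ∈ Icc (2*m) S, 1 / (128 * (s₁:ℝ)) =
      (1/128) * ∑ k ∈ Icc (2*m) S, (1:ℝ)/k := by
    rw [mul_sum]
    refine sum_congr rfl fun k _ => ?_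
    rw [div_mul_eq_mul_div, one_mul, one_div, one_div, mul_inv]
    ring
  -- the log comparison
  have hNR : (0:ℝ) < (N:ℝ) := by
    have h1 : 1 ≤ m * m := le_trans hm hmm
    have h2 : 576 * 1 ≤ 576 * (m*m) := Nat.mul_le_mul_left 576 h1
    have h3 : m * m = m^2 := (sq m).symm
    have : 0 < N := by
      rw [h3] at h2
      omega
    exact_mod_cast this
  have hmR : (1:ℝ) ≤ (m:ℝ) := by exact_mod_cast hm
  have hx : (N:ℝ) + 1 ≤ 24 * ((S:ℝ) + 1) := by
    have h24 : N + 1 ≤ 24 * (S + 1) := by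
      have h1 := Nat.div_add_mod N 24
      have h2 : N % 24 < 24 := Nat.mod_lt _ (by norm_num)
      omega
    exact_mod_cast h24
  have hNmR : 576 * (m:ℝ)^2 ≤ (N:ℝ) := by exact_mod_cast hNm
  have hcube : (N:ℝ) * (2*(m:ℝ))^3 ≤ ((S:ℝ)+1)^3 := by
    have h1 : (N:ℝ)/24 ≤ (S:ℝ)+1 := by linarith
    have h2 : ((N:ℝ)/24)^3 ≤ ((S:ℝ)+1)^3 := by
      apply pow_le_pow_left₀ (by positivity) h1
    have h3 : (576 * (m:ℝ)^2)^2 ≤ (N:ℝ)^2 := by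
      apply pow_le_pow_left₀ (by positivity) hNmR
    have h3' : 331776 * (m:ℝ)^4 ≤ (N:ℝ)^2 := by nlinarith [h3]
    have h4 : (m:ℝ)^3 ≤ (m:ℝ)^4 := by nlinarith [hmR]
    have h5 : (N:ℝ) * (331776 * (m:ℝ)^4) ≤ (N:ℝ) * (N:ℝ)^2 :=
      mul_le_mul_of_nonneg_left h3' hNR.le
    have h5' : (N:ℝ) * (m:ℝ)^3 ≤ (N:ℝ) * (m:ℝ)^4 :=
      mul_le_mul_of_nonneg_left h4 hNR.le
    have h6 : 110592 * ((N:ℝ) * (m:ℝ)^3) ≤ (N:ℝ)^3 := by nlinarith [h5, h5']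
    have h7 : ((N:ℝ)/24)^3 = (N:ℝ)^3 / 13824 := by ring
    have h8 : (N:ℝ) * (2*(m:ℝ))^3 = 8 * ((N:ℝ) * (m:ℝ)^3) := by ring
    rw [h8]
    rw [h7] at h2
    linarith only [h2, h6]
  have hlog : (1/3:ℝ) * Real.log N ≤ Real.log ((S:ℝ)+1) - Real.log ((2*m:ℕ):ℝ) := by
    have hpos : (0:ℝ) < (N:ℝ) * (2*(m:ℝ))^3 := by positivity
    have hmono := Real.log_le_log hpos hcube
    rw [Real.log_mul (ne_of_gt hNR) (by positivity), Real.log_pow, Real.log_pow] at hmono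
    have hcast : ((2*m:ℕ):ℝ) = 2*(m:ℝ) := by push_cast; ring
    rw [hcast]
    push_cast at hmono
    linarith
  have hfinal : (1/384 : ℝ) * Real.log N ≤
      ∑ s₁ ∈ Icc (2*m) S, 1 / (128 * (s₁:ℝ)) := by
    rw [hdistr]
    have hcast2 : Real.log ((S:ℝ) + 1) - Real.log ((2*m:ℕ):ℝ) ≤
        ∑ k ∈ Icc (2*m) S, (1:ℝ)/k := hharm
    have h1 : (1/3:ℝ) * Real.log N ≤ ∑ k ∈ Icc (2*m) S, (1:ℝ)/k := by linarith
    linarith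
  linarith
end

section
/- For every dimension d ≥ 1 there exists a constant c > 0 (depending only on d) such that for every symmetric positive-definite real d×d matrix Q, defining the norm ‖x‖ = √((1/d) ∑_{i,j=1}^d x_i (Q⁻¹)_{ij} x_j) on ℝ^d and D = det(Q)^{1/(2d)}, one has for every real L ≥ 1: the number of lattice points x ∈ ℤ^d with ‖x‖ ≤ L is at least c·D^d·L^d. -/
open scoped BigOperators

noncomputable section

/-- The distribution of the `n`-step random walk on `ℤ^d` with step distribution `p`,
started at the origin: `rwStep p n y = P(S(n) = y)` (the `n`-fold convolution of `p`). -/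
noncomputable def rwStep {d : ℕ} (p : (Fin d → ℤ) → ℝ) : ℕ → (Fin d → ℤ) → ℝ
  | 0, y => if y = 0 then 1 else 0
  | n + 1, y => ∑' x : Fin d → ℤ, rwStep p n x * p (y - x)

/-- Coercion of a lattice point of `ℤ^d` to a real vector. -/
def toR {d : ℕ} (x : Fin d → ℤ) : Fin d → ℝ := fun i => (x i : ℝ)

/-- The Euclidean length `|x|` of a lattice point. -/
noncomputable def euclNorm {d : ℕ} (x : Fin d → ℤ) : ℝ :=
  Real.sqrt (∑ i, ((x i : ℝ)) ^ 2)

/-- The covariance matrix `Q` of the step distribution: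
`Q i j = ∑_{x ∈ ℤ^d} xᵢ xⱼ p(x)`. -/
noncomputable def covMatrix {d : ℕ} (p : (Fin d → ℤ) → ℝ) : Matrix (Fin d) (Fin d) ℝ :=
  Matrix.of fun i j => ∑' x : Fin d → ℤ, (x i : ℝ) * (x j : ℝ) * p x

/-- The squared norm `‖x‖² = (1/d) ∑ᵢⱼ xᵢ (Q⁻¹)ᵢⱼ xⱼ` induced by `Q⁻¹`. -/
noncomputable def qNormSq {d : ℕ} (Q : Matrix (Fin d) (Fin d) ℝ) (x : Fin d → ℝ) : ℝ :=
  (1 / (d : ℝ)) * ∑ i, ∑ j, x i * Q⁻¹ i j * x j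

/-- The norm `‖x‖ = √((1/d) ∑ᵢⱼ xᵢ (Q⁻¹)ᵢⱼ xⱼ)` induced by `Q⁻¹`. -/
noncomputable def qNorm {d : ℕ} (Q : Matrix (Fin d) (Fin d) ℝ) (x : Fin d → ℝ) : ℝ :=
  Real.sqrt (qNormSq Q x)

/-- The scale factor `D = det(Q)^{1/(2d)}`. -/
noncomputable def Dconst {d : ℕ} (Q : Matrix (Fin d) (Fin d) ℝ) : ℝ :=
  Q.det ^ ((1 : ℝ) / (2 * d))

open MeasureTheory Pointwise Matrix

namespace LatticeCount

variable {d : ℕ}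

/-- Euclidean length of a real vector. -/
noncomputable def eN (v : Fin d → ℝ) : ℝ := Real.sqrt (∑ i, v i ^ 2)

lemma eN_eq_norm (v : Fin d → ℝ) :
    eN v = ‖(WithLp.equiv 2 (Fin d → ℝ)).symm v‖ := by
  rw [EuclideanSpace.norm_eq]
  simp [eN, sq_abs]

lemma eN_nonneg (v : Fin d → ℝ) : 0 ≤ eN v := Real.sqrt_nonneg _

lemma eN_sub_le (u w : Fin d → ℝ) : eN (u - w) ≤ eN u + eN w := by
  simp only [eN_eq_norm]
  rw [show (WithLp.equiv 2 (Fin d → ℝ)).symm (u - w)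
      = (WithLp.equiv 2 (Fin d → ℝ)).symm u - (WithLp.equiv 2 (Fin d → ℝ)).symm w from rfl]
  exact norm_sub_le _ _

lemma eN_smul (c : ℝ) (v : Fin d → ℝ) : eN (c • v) = |c| * eN v := by
  simp only [eN_eq_norm]
  rw [show (WithLp.equiv 2 (Fin d → ℝ)).symm (c • v)
      = c • (WithLp.equiv 2 (Fin d → ℝ)).symm v from rfl]
  simp [norm_smul]

lemma abs_apply_le_eN (v : Fin d → ℝ) (i : Fin d) : |v i| ≤ eN v := by
  rw [← Real.sqrt_sq_eq_abs]
  exact Real.sqrt_le_sqrt (Finset.single_le_sum (f := fun j => v j ^ 2)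
    (fun j _ => sq_nonneg _) (Finset.mem_univ i))

lemma eN_sq (v : Fin d → ℝ) : eN v ^ 2 = ∑ i, v i ^ 2 :=
  Real.sq_sqrt (Finset.sum_nonneg fun i _ => sq_nonneg _)

lemma measurable_eN : Measurable (eN (d := d)) := by
  apply Real.continuous_sqrt.measurable.comp
  exact Finset.measurable_sum _ fun i _ => (measurable_pi_apply i).pow_const 2


open scoped MatrixOrder

/-- A square root of `Q⁻¹`. -/

lemma exists_sqrt_inv {Q : Matrix (Fin d) (Fin d) ℝ} (hQ : Q.PosDef) :
    ∃ B : Matrix (Fin d) (Fin d) ℝ, B.det ^ 2 * Q.det = 1 ∧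
      ∀ v : Fin d → ℝ, ∑ i, (B.mulVec v) i ^ 2 = ∑ i, ∑ j, v i * Q⁻¹ i j * v j := by
  have hQi : (Q⁻¹).PosDef := hQ.inv
  set B := CFC.sqrt (Q⁻¹) with hBdef
  have hB : B * B = Q⁻¹ := CFC.sqrt_mul_sqrt_self _ (Matrix.nonneg_iff_posSemidef.mpr hQi.posSemidef)
  have hBsymm : Bᵀ = B := by
    have := (Matrix.nonneg_iff_posSemidef.mp (CFC.sqrt_nonneg (Q⁻¹))).1
    rwa [Matrix.IsHermitian, Matrix.conjTranspose_eq_transpose_of_trivial] at this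
  have hsym : ∀ a b, B a b = B b a := by
    intro a b
    conv_rhs => rw [← hBsymm]
    rfl
  refine ⟨B, ?_, ?_⟩
  · have hdet : B.det * B.det = (Q⁻¹).det := by rw [← Matrix.det_mul, hB]
    have hinv : (Q⁻¹).det = Q.det⁻¹ := by
      rw [Matrix.det_nonsing_inv, Ring.inverse_eq_inv]
    rw [sq, hdet, hinv, inv_mul_cancel₀ hQ.det_pos.ne']
  · intro v
    have key : ∀ i j, (Q⁻¹) i j = ∑ k, B k i * B k j := by
      intro i j
      rw [← hB]
      simp only [Matrix.mul_apply]
      exact Finset.sum_congr rfl fun k _ => by rw [hsym i k]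
    calc ∑ i, (B.mulVec v) i ^ 2
        = ∑ k, (∑ i, B k i * v i) * (∑ j, B k j * v j) := by
          simp [Matrix.mulVec, dotProduct, sq]
      _ = ∑ k, ∑ i, ∑ j, (v i * (B k i * B k j) * v j) := by
          refine Finset.sum_congr rfl fun k _ => ?_
          rw [Finset.sum_mul_sum]
          refine Finset.sum_congr rfl fun i _ => Finset.sum_congr rfl fun j _ => ?_
          ring
      _ = ∑ i, ∑ j, v i * (∑ k, B k i * B k j) * v j := by
          rw [Finset.sum_comm]
          refine Finset.sum_congr rfl fun i _ => ?_
          rw [Finset.sum_comm]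
          refine Finset.sum_congr rfl fun j _ => ?_
          rw [Finset.mul_sum, Finset.sum_mul]
      _ = ∑ i, ∑ j, v i * (Q⁻¹) i j * v j := by
          simp_rw [key]


/-- The cube of points whose floor is `x`. -/

def cube (x : Fin d → ℤ) : Set (Fin d → ℝ) := {v | ∀ i, ⌊v i⌋ = x i}

lemma cube_eq (x : Fin d → ℤ) :
    cube x = Set.pi Set.univ fun i => Set.Ico (x i : ℝ) (x i + 1) := by
  ext v
  simp only [cube, Set.mem_setOf_eq, Set.mem_pi, Set.mem_univ, forall_true_left]
  exact forall_congr' fun i => Int.floor_eq_iff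

lemma cube_measurable (x : Fin d → ℤ) : MeasurableSet (cube x) := by
  rw [cube_eq]
  exact MeasurableSet.univ_pi fun i => measurableSet_Ico

lemma volume_cube_zero : volume (cube (0 : Fin d → ℤ)) = 1 := by
  rw [cube_eq, volume_pi_pi]
  simp

lemma cube_disjoint : Pairwise (Function.onFun Disjoint (cube (d := d))) := by
  intro x y hxy
  rw [Function.onFun, Set.disjoint_left]
  intro v hv hv'
  exact hxy (funext fun i => (hv i).symm.trans (hv' i))

lemma cube_cover : (⋃ x : Fin d → ℤ, cube x) = Set.univ := by
  ext v
  simp only [Set.mem_iUnion, Set.mem_univ, iff_true]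
  exact ⟨fun i => ⌊v i⌋, fun i => rfl⟩

lemma preimage_cube (x : Fin d → ℤ) :
    (fun v : Fin d → ℝ => toR x + v) ⁻¹' cube x = cube 0 := by
  ext v
  simp only [Set.mem_preimage, cube, Set.mem_setOf_eq, Pi.add_apply, toR]
  refine forall_congr' fun i => ?_
  rw [Int.floor_intCast_add]
  simp only [Pi.zero_apply]
  omega

/-- Blichfeldt-type: if `volume s > n` then some translate of the lattice meets `s`
in more than `n` points. -/
lemma exists_many_translates (s : Set (Fin d → ℝ)) (hs : MeasurableSet s) (n : ℕ)
    (h : (n : ENNReal) < volume s) :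
    ∃ t : Fin d → ℝ, ∃ T : Finset (Fin d → ℤ), T.card = n + 1 ∧
      ∀ x ∈ T, toR x + t ∈ s := by
  classical
  by_contra hcon
  push_neg at hcon
  -- all fibers have at most n points
  have hfib : ∀ t : Fin d → ℝ, ∀ T : Finset (Fin d → ℤ),
      (∀ x ∈ T, toR x + t ∈ s) → T.card ≤ n := by
    intro t T hT
    by_contra hc
    push_neg at hc
    obtain ⟨T', hT'sub, hT'card⟩ := Finset.exists_subset_card_eq hc
    obtain ⟨x, hxT', hx⟩ := hcon t T' hT'card
    exact hx (hT x (hT'sub hxT'))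
  -- decompose volume over cubes
  have hdecomp : volume s = ∑' x : Fin d → ℤ, volume (s ∩ cube x) := by
    conv_lhs => rw [← Set.inter_univ s, ← cube_cover, Set.inter_iUnion]
    exact measure_iUnion (fun x y hxy => (cube_disjoint hxy).mono
      Set.inter_subset_right Set.inter_subset_right)
      fun x => hs.inter (cube_measurable x)
  have htrans : ∀ x : Fin d → ℤ, volume (s ∩ cube x)
      = volume (((fun v => toR x + v) ⁻¹' s) ∩ cube 0) := by
    intro x
    rw [← preimage_cube x, ← Set.preimage_inter]
    exact (measure_preimage_add volume (toR x) _).symm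
  have hmeas : ∀ x : Fin d → ℤ, MeasurableSet ((fun v : Fin d → ℝ => toR x + v) ⁻¹' s) :=
    fun x => hs.preimage (measurable_const.add measurable_id)
  have hint : ∀ x : Fin d → ℤ, volume (((fun v => toR x + v) ⁻¹' s) ∩ cube 0)
      = ∫⁻ v in cube 0, Set.indicator ((fun v : Fin d → ℝ => toR x + v) ⁻¹' s) 1 v := by
    intro x
    rw [lintegral_indicator_one (hmeas x), Measure.restrict_apply (hmeas x)]
  have hsum : volume s = ∫⁻ v in cube 0,
      ∑' x : Fin d → ℤ, Set.indicator ((fun v : Fin d → ℝ => toR x + v) ⁻¹' s) 1 v := by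
    rw [hdecomp]
    simp_rw [htrans, hint]
    exact (lintegral_tsum fun x =>
      ((measurable_const.indicator (hmeas x)).aemeasurable)).symm
  -- pointwise bound
  have hpt : ∀ v : Fin d → ℝ,
      (∑' x : Fin d → ℤ, Set.indicator ((fun v : Fin d → ℝ => toR x + v) ⁻¹' s) 1 v)
        ≤ (n : ENNReal) := by
    intro v
    rw [ENNReal.tsum_eq_iSup_sum]
    refine iSup_le fun F => ?_
    have : ∀ x : Fin d → ℤ,
        Set.indicator ((fun v : Fin d → ℝ => toR x + v) ⁻¹' s) (1 : (Fin d → ℝ) → ENNReal) v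
          = if toR x + v ∈ s then 1 else 0 := by
      intro x
      rw [Set.indicator_apply]
      rfl
    simp_rw [this]
    rw [← Finset.sum_filter]
    simp only [Finset.sum_const, smul_eq_mul, mul_one, nsmul_eq_mul]
    have hcard := hfib v (F.filter fun x => toR x + v ∈ s)
      (fun x hx => (Finset.mem_filter.mp hx).2)
    exact_mod_cast Nat.cast_le.mpr hcard
  have : volume s ≤ (n : ENNReal) := by
    rw [hsum]
    calc ∫⁻ v in cube 0, _ ≤ ∫⁻ _ in cube 0, (n : ENNReal) := lintegral_mono hpt
      _ = (n : ENNReal) * volume (cube 0) := by rw [lintegral_const, Measure.restrict_apply_univ]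
      _ = n := by rw [volume_cube_zero, mul_one]
  exact absurd h this.not_gt


open Pointwise

/-- Euclidean ball in the pi space. -/

def eBall (d : ℕ) (r : ℝ) : Set (Fin d → ℝ) := {v | eN v ≤ r}

lemma eBall_smul {r : ℝ} (hr : 0 < r) (R : ℝ) :
    eBall d (r * R) = r • eBall d R := by
  ext w
  rw [Set.mem_smul_set_iff_inv_smul_mem₀ hr.ne']
  simp only [eBall, Set.mem_setOf_eq, eN_smul, abs_inv, abs_of_pos hr]
  rw [inv_mul_le_iff₀ hr]

lemma volume_eBall_smul {r : ℝ} (hr : 0 < r) (R : ℝ) :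
    volume (eBall d (r * R)) = ENNReal.ofReal (r ^ d) * volume (eBall d R) := by
  rw [eBall_smul hr R, Measure.addHaar_smul]
  congr 2
  · rw [abs_of_nonneg (pow_nonneg hr.le _), Module.finrank_fin_fun]

lemma volume_eBall_pos (hd : 1 ≤ d) : 0 < volume (eBall d 1) := by
  refine lt_of_lt_of_le (Metric.measure_ball_pos volume (0 : Fin d → ℝ)
    (show (0:ℝ) < (Real.sqrt d)⁻¹ by positivity) ) (measure_mono ?_)
  intro v hv
  simp only [Metric.mem_ball, dist_zero_right] at hv
  have hsd : 0 < Real.sqrt d := Real.sqrt_pos.mpr (by exact_mod_cast hd)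
  have h1 : eN v ≤ Real.sqrt d * ‖v‖ := by
    rw [eN, show (Real.sqrt d * ‖v‖) = Real.sqrt (d * ‖v‖^2) by
      rw [Real.sqrt_mul (by positivity), Real.sqrt_sq (norm_nonneg _)]]
    apply Real.sqrt_le_sqrt
    calc ∑ i, v i ^ 2 ≤ ∑ _i : Fin d, ‖v‖^2 := by
          refine Finset.sum_le_sum fun i _ => ?_
          rw [← sq_abs]
          exact pow_le_pow_left₀ (abs_nonneg _) (norm_le_pi_norm v i) 2
      _ = d * ‖v‖^2 := by simp [mul_comm]
  refine le_trans h1 ?_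
  calc Real.sqrt d * ‖v‖ ≤ Real.sqrt d * (Real.sqrt d)⁻¹ :=
        mul_le_mul_of_nonneg_left hv.le hsd.le
    _ = 1 := mul_inv_cancel₀ hsd.ne'

lemma volume_eBall_lt_top : volume (eBall d 1) < ⊤ := by
  refine lt_of_le_of_lt (measure_mono ?_) (measure_closedBall_lt_top (x := (0 : Fin d → ℝ)) (r := 1))
  intro v hv
  simp only [Metric.mem_closedBall, dist_zero_right]
  rw [pi_norm_le_iff_of_nonneg zero_le_one]
  exact fun i => le_trans (abs_apply_le_eN v i) hv


end LatticeCount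

open MeasureTheory Matrix LatticeCount

/-- For every `d ≥ 1` there is `c > 0` depending only on `d` such that for every
symmetric positive-definite `Q`, with `‖x‖` the norm induced by `Q⁻¹` and
`D = det(Q)^{1/(2d)}`, for every `L ≥ 1` the number of lattice points with `‖x‖ ≤ L`
is at least `c·D^d·L^d`. -/
theorem lattice_points_in_ellipsoid_lower_bound (d : ℕ) (hd : 1 ≤ d) :
    ∃ c : ℝ, 0 < c ∧ ∀ Q : Matrix (Fin d) (Fin d) ℝ, Q.PosDef →
      ∀ L : ℝ, 1 ≤ L →
        c * Dconst Q ^ d * L ^ d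
          ≤ (({x : Fin d → ℤ | qNorm Q (toR x) ≤ L}).ncard : ℝ) := by
  classical
  have hd0 : 0 < (d : ℝ) := by exact_mod_cast hd
  have hsd : 0 < Real.sqrt d := Real.sqrt_pos.mpr hd0
  set V : ENNReal := volume (eBall d 1) with hV
  have hVpos : 0 < V := volume_eBall_pos hd
  have hVtop : V ≠ ⊤ := volume_eBall_lt_top.ne
  have hVR : 0 < V.toReal := ENNReal.toReal_pos hVpos.ne' hVtop
  refine ⟨V.toReal * (Real.sqrt d / 2) ^ d, by positivity, ?_⟩
  intro Q hQ L hL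
  have hL0 : 0 < L := lt_of_lt_of_le one_pos hL
  obtain ⟨B, hBdet, hBq⟩ := exists_sqrt_inv hQ
  have hQdet : 0 < Q.det := hQ.det_pos
  have hBd0 : B.det ≠ 0 := by
    intro h0; rw [h0] at hBdet; simp at hBdet
  -- representation of qNorm
  have hrep : ∀ v : Fin d → ℝ, qNorm Q v = eN (B.mulVec v) / Real.sqrt d := by
    intro v
    rw [qNorm, qNormSq, ← hBq v, ← eN_sq, one_div, Real.sqrt_mul (by positivity),
      Real.sqrt_sq (eN_nonneg _), Real.sqrt_inv, div_eq_inv_mul]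
  have hlev : ∀ (v : Fin d → ℝ) (R : ℝ), (qNorm Q v ≤ R ↔ eN (B.mulVec v) ≤ Real.sqrt d * R) := by
    intro v R
    rw [hrep, div_le_iff₀ hsd, mul_comm]
  -- the matrix A
  set A : Matrix (Fin d) (Fin d) ℝ := B⁻¹ with hA
  have hBunit : IsUnit B.det := isUnit_iff_ne_zero.mpr hBd0
  have hAB : A * B = 1 := Matrix.nonsing_inv_mul B hBunit
  have hBA : B * A = 1 := Matrix.mul_nonsing_inv B hBunit
  have hABv : ∀ v : Fin d → ℝ, A.mulVec (B.mulVec v) = v := by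
    intro v; rw [Matrix.mulVec_mulVec, hAB, Matrix.one_mulVec]
  have hBAv : ∀ v : Fin d → ℝ, B.mulVec (A.mulVec v) = v := by
    intro v; rw [Matrix.mulVec_mulVec, hBA, Matrix.one_mulVec]
  have hAdet : |A.det| = Real.sqrt Q.det := by
    have h1 : A.det = B.det⁻¹ := by
      rw [hA, Matrix.det_nonsing_inv, Ring.inverse_eq_inv]
    have h2 : Real.sqrt Q.det * |B.det| = 1 := by
      have : Real.sqrt (B.det ^ 2 * Q.det) = 1 := by rw [hBdet, Real.sqrt_one]
      rwa [Real.sqrt_mul (sq_nonneg _), Real.sqrt_sq_eq_abs, mul_comm] at this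
    rw [h1, abs_inv]
    field_simp
    nlinarith [Real.sqrt_nonneg Q.det, abs_nonneg B.det]
  -- the half-size body
  set s : Set (Fin d → ℝ) := {v | qNorm Q v ≤ L / 2} with hsdef
  have hs_eq : s = (fun v => B.mulVec v) ⁻¹' eBall d (Real.sqrt d * (L / 2)) := by
    ext v
    simp only [hsdef, Set.mem_setOf_eq, Set.mem_preimage, eBall]
    exact hlev v (L / 2)
  have hmulVec_meas : Measurable fun v : Fin d → ℝ => B.mulVec v := by
    apply measurable_pi_lambda
    intro i
    simp only [Matrix.mulVec, dotProduct]
    exact Finset.measurable_sum _ fun j _ => (measurable_pi_apply j).const_mul _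
  have hs_meas : MeasurableSet s := by
    rw [hs_eq]
    exact (measurable_eN.comp hmulVec_meas) measurableSet_Iic
  -- s as a linear image of a ball
  have hs_img : s = (Matrix.toLin' A) '' eBall d (Real.sqrt d * (L / 2)) := by
    rw [hs_eq]
    ext v
    simp only [Set.mem_preimage, Set.mem_image, Matrix.toLin'_apply]
    constructor
    · intro hv; exact ⟨B.mulVec v, hv, hABv v⟩
    · rintro ⟨w, hw, rfl⟩; rwa [hBAv w]
  have hvol_s : volume s = ENNReal.ofReal (Real.sqrt Q.det * ((Real.sqrt d / 2) ^ d * L ^ d)) * V := by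
    rw [hs_img, Measure.addHaar_image_linearMap, LinearMap.det_toLin', hAdet]
    have h2 : Real.sqrt d * (L / 2) = (Real.sqrt d / 2 * L) * 1 := by ring
    rw [h2, volume_eBall_smul (by positivity), ← hV, ← mul_assoc,
      ← ENNReal.ofReal_mul (Real.sqrt_nonneg _)]
    congr 2
    rw [mul_pow]
  -- Dconst identity
  have hD : Dconst Q ^ d = Real.sqrt Q.det := by
    rw [Dconst, ← Real.rpow_natCast (Q.det ^ ((1:ℝ)/(2*d))) d, ← Real.rpow_mul hQdet.le]
    have h12 : (1:ℝ)/(2*d) * d = 1/2 := by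
      field_simp
    rw [h12, ← Real.sqrt_eq_rpow]
  -- the target real number
  set r : ℝ := V.toReal * (Real.sqrt d / 2) ^ d * (Dconst Q ^ d) * L ^ d with hr
  have hrpos : 0 < r := by
    rw [hr, hD]; positivity
  have hvol_r : ENNReal.ofReal r = volume s := by
    rw [hvol_s, hr, hD]
    rw [show V.toReal * (Real.sqrt d / 2) ^ d * Real.sqrt Q.det * L ^ d
        = (Real.sqrt Q.det * ((Real.sqrt d / 2) ^ d * L ^ d)) * V.toReal by ring]
    rw [ENNReal.ofReal_mul (by positivity), ENNReal.ofReal_toReal hVtop]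
  set n : ℕ := ⌈r⌉₊ - 1 with hn
  have hceil_pos : 0 < ⌈r⌉₊ := Nat.ceil_pos.mpr hrpos
  have hn1 : n + 1 = ⌈r⌉₊ := Nat.succ_pred_eq_of_pos hceil_pos
  have hnr : (n : ℝ) < r := Nat.lt_ceil.mp (by omega)
  have hnvol : (n : ENNReal) < volume s := by
    rw [← hvol_r, ← ENNReal.ofReal_natCast]
    exact (ENNReal.ofReal_lt_ofReal_iff hrpos).mpr hnr
  obtain ⟨t, T, hTcard, hTmem⟩ := exists_many_translates s hs_meas n hnvol
  -- the lattice point set and its finiteness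
  set S : Set (Fin d → ℤ) := {x : Fin d → ℤ | qNorm Q (toR x) ≤ L} with hS
  have hSfin : S.Finite := by
    set M : ℝ := (∑ i, ∑ j, |A i j|) * (Real.sqrt d * L) with hM
    have hbound : ∀ x ∈ S, ∀ i, |(x i : ℝ)| ≤ M := by
      intro x hx i
      have h1 : eN (B.mulVec (toR x)) ≤ Real.sqrt d * L := (hlev (toR x) L).mp hx
      have h2 : toR x = A.mulVec (B.mulVec (toR x)) := (hABv (toR x)).symm
      have h3 : |(x i : ℝ)| = |(A.mulVec (B.mulVec (toR x))) i| := by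
        rw [← h2]; rfl
      rw [h3]
      set w := B.mulVec (toR x) with hw
      calc |(A.mulVec w) i| = |∑ j, A i j * w j| := rfl
        _ ≤ ∑ j, |A i j * w j| := Finset.abs_sum_le_sum_abs _ _
        _ ≤ ∑ j, |A i j| * (Real.sqrt d * L) := by
            refine Finset.sum_le_sum fun j _ => ?_
            rw [abs_mul]
            exact mul_le_mul_of_nonneg_left
              (le_trans (abs_apply_le_eN w j) h1) (abs_nonneg _)
        _ = (∑ j, |A i j|) * (Real.sqrt d * L) := by rw [Finset.sum_mul]
        _ ≤ M := by
            rw [hM]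
            refine mul_le_mul_of_nonneg_right ?_ (by positivity)
            exact Finset.single_le_sum (f := fun i => ∑ j, |A i j|)
              (fun i _ => Finset.sum_nonneg fun j _ => abs_nonneg _) (Finset.mem_univ i)
    refine Set.Finite.subset (Set.Finite.pi (fun i : Fin d => Set.finite_Icc (-⌈M⌉) ⌈M⌉)) ?_
    intro x hx
    simp only [Set.mem_pi, Set.mem_univ, forall_true_left, Set.mem_Icc]
    intro i
    have := hbound x hx i
    have habs : |(x i : ℝ)| ≤ (⌈M⌉ : ℝ) := le_trans this (Int.le_ceil M)
    rw [abs_le] at habs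
    constructor
    · exact_mod_cast habs.1
    · exact_mod_cast habs.2
  -- produce n+1 points of S
  have hTne : T.Nonempty := Finset.card_pos.mp (by omega)
  obtain ⟨x₀, hx₀⟩ := hTne
  set T' : Finset (Fin d → ℤ) := T.image (fun x => x - x₀) with hT'
  have hT'card : T'.card = n + 1 := by
    rw [hT', Finset.card_image_of_injective _ (fun a b h => by
      have := congrArg (fun z => z + x₀) h
      simpa using this), hTcard]
  have hT'sub : ↑T' ⊆ S := by
    intro y hy
    simp only [hT', Finset.coe_image, Set.mem_image, Finset.mem_coe] at hy
    obtain ⟨x, hxT, rfl⟩ := hy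
    have hu : toR x + t ∈ s := hTmem x hxT
    have hw : toR x₀ + t ∈ s := hTmem x₀ hx₀
    have hu' : eN (B.mulVec (toR x + t)) ≤ Real.sqrt d * (L/2) := (hlev _ _).mp hu
    have hw' : eN (B.mulVec (toR x₀ + t)) ≤ Real.sqrt d * (L/2) := (hlev _ _).mp hw
    have hdiff : toR (x - x₀) = (toR x + t) - (toR x₀ + t) := by
      funext i
      simp only [toR, Pi.sub_apply, Pi.add_apply]
      push_cast
      ring
    show qNorm Q (toR (x - x₀)) ≤ L
    rw [hlev, hdiff, Matrix.mulVec_sub]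
    calc eN (B.mulVec (toR x + t) - B.mulVec (toR x₀ + t))
        ≤ eN (B.mulVec (toR x + t)) + eN (B.mulVec (toR x₀ + t)) := eN_sub_le _ _
      _ ≤ Real.sqrt d * (L/2) + Real.sqrt d * (L/2) := add_le_add hu' hw'
      _ = Real.sqrt d * L := by ring
  -- conclude
  have hcount : (n + 1 : ℕ) ≤ S.ncard := by
    rw [← hT'card, ← Set.ncard_coe_finset T']
    exact Set.ncard_le_ncard hT'sub hSfin
  have hfinal : r ≤ (S.ncard : ℝ) := by
    calc r ≤ (⌈r⌉₊ : ℝ) := Nat.le_ceil r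
      _ = ((n + 1 : ℕ) : ℝ) := by rw [hn1]
      _ ≤ (S.ncard : ℝ) := by exact_mod_cast hcount
  calc V.toReal * (Real.sqrt d / 2) ^ d * Dconst Q ^ d * L ^ d = r := by rw [hr]
    _ ≤ _ := hfinal
end
end
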